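/- For any stationary finite-alphabet source S (not necessarily ergodic) admitting an ergodic decomposition with integrable entropy rates, lim inf_{L→∞} (1/(L−1)) H_m(R_1, ..., R_L) ≥ h_m(S), the Shannon entropy rate of S. -/

import Mathlib

open MeasureTheory ProbabilityTheory Filter Real

/-- Shannon entropy (base 2) of a random variable. -/
noncomputable def shEntropy {Ω : Type*} [MeasurableSpace Ω] {A : Type*}
    (μ : Measure Ω) (X : Ω → A) : ℝ :=
  -∑' a : A, (μ (X ⁻¹' {a})).toReal * Real.logb 2 (μ (X ⁻¹' {a})).toReal

open Classical in
/-- Rank variable `R_n(ω) = #{i : 1 ≤ i ≤ n, S_i(ω) ≤ S_n(ω)}`. -/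
noncomputable def rankVar {Ω A : Type*} [LinearOrder A] (S : ℕ → Ω → A) (n : ℕ) (ω : Ω) : ℕ :=
  ((Finset.Icc 1 n).filter (fun i => S i ω ≤ S n ω)).card

/-- The shift on sequence space. -/
def seqShift {A : Type*} (x : ℕ → A) : ℕ → A := fun n => x (n + 1)

/-- The coordinate process on sequence space, 1-indexed: `S_n(x) = x_{n-1}`. -/
def coordProc {A : Type*} (n : ℕ) (x : ℕ → A) : A := x (n - 1)

/-! ### Auxiliary analytic lemmas -/

lemma concaveOn_logb_two : ConcaveOn ℝ (Set.Ioi 0) (Real.logb 2) := by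
  have h := (strictConcaveOn_log_Ioi.concaveOn).smul
    (c := (Real.log 2)⁻¹) (by positivity)
  have heq : Real.logb 2 = (Real.log 2)⁻¹ • Real.log := by
    funext x
    simp [Real.logb, div_eq_inv_mul, smul_eq_mul]
  rw [heq]
  exact h

/-- Grouped entropy bound: for nonnegative reals `p i` on a finset of size at most `K`,
`∑ -(p i log₂ p i) ≤ -(q log₂ q) + q log₂ K` where `q = ∑ p i`. -/
lemma sum_neg_mul_logb_le {ι : Type*} (s : Finset ι) (p : ι → ℝ)
    (hp : ∀ i ∈ s, 0 ≤ p i) (K : ℕ) (hcard : s.card ≤ K) (hK : 1 ≤ K) :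
    ∑ i ∈ s, -(p i * Real.logb 2 (p i)) ≤
      -((∑ i ∈ s, p i) * Real.logb 2 (∑ i ∈ s, p i))
        + (∑ i ∈ s, p i) * Real.logb 2 K := by
  classical
  set q : ℝ := ∑ i ∈ s, p i with hqdef
  have hq0 : 0 ≤ q := Finset.sum_nonneg hp
  set s' : Finset ι := s.filter (fun i => p i ≠ 0) with hs'def
  have hsum' : ∑ i ∈ s', p i = q := Finset.sum_filter_ne_zero s
  have hlhs : ∑ i ∈ s, -(p i * Real.logb 2 (p i))
      = ∑ i ∈ s', -(p i * Real.logb 2 (p i)) := by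
    refine (Finset.sum_subset (Finset.filter_subset _ _) ?_).symm
    intro i hi hni
    have hpi : p i = 0 := by
      by_contra hne
      exact hni (Finset.mem_filter.2 ⟨hi, hne⟩)
    simp [hpi]
  rcases eq_or_lt_of_le hq0 with hq | hq
  · have hall : ∀ i ∈ s, p i = 0 :=
      fun i hi => (Finset.sum_eq_zero_iff_of_nonneg hp).1 hq.symm i hi
    have hz : ∀ i ∈ s, -(p i * Real.logb 2 (p i)) = 0 := by
      intro i hi; simp [hall i hi]
    rw [Finset.sum_congr rfl hz]
    simp [← hq]
  · have hqne : q ≠ 0 := ne_of_gt hq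
    have hpos : ∀ i ∈ s', 0 < p i := by
      intro i hi
      rcases Finset.mem_filter.1 hi with ⟨his, hne⟩
      exact lt_of_le_of_ne (hp i his) (Ne.symm hne)
    have hne' : s'.Nonempty := by
      by_contra hemp
      rw [Finset.not_nonempty_iff_eq_empty] at hemp
      rw [hemp, Finset.sum_empty] at hsum'
      exact hqne hsum'.symm
    have hcard1 : (1:ℝ) ≤ (s'.card : ℝ) := by
      exact_mod_cast Finset.card_pos.2 hne'
    have hcardK : ((s'.card : ℝ)) ≤ (K : ℝ) := by
      exact_mod_cast le_trans (Finset.card_le_card (Finset.filter_subset _ _)) hcard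
    have hjen := concaveOn_logb_two.le_map_sum (t := s')
      (w := fun i => p i / q) (p := fun i => (p i)⁻¹)
      (fun i hi => div_nonneg (le_of_lt (hpos i hi)) hq0)
      (by rw [← Finset.sum_div, hsum', div_self hqne])
      (fun i hi => Set.mem_Ioi.2 (inv_pos.2 (hpos i hi)))
    have hsum1 : ∑ i ∈ s', (p i / q) • (p i)⁻¹ = (s'.card : ℝ) / q := by
      have hconst : ∀ i ∈ s', (p i / q) • (p i)⁻¹ = 1 / q := by
        intro i hi
        have hne := (hpos i hi).ne'
        rw [smul_eq_mul]
        field_simp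
      rw [Finset.sum_congr rfl hconst, Finset.sum_const, nsmul_eq_mul]
      ring
    rw [hsum1] at hjen
    have hrw : ∑ i ∈ s', -(p i * Real.logb 2 (p i))
        = q * ∑ i ∈ s', (p i / q) • Real.logb 2 ((p i)⁻¹) := by
      rw [Finset.mul_sum]
      refine Finset.sum_congr rfl (fun i hi => ?_)
      rw [smul_eq_mul, Real.logb_inv]
      field_simp
    have hmain : ∑ i ∈ s', -(p i * Real.logb 2 (p i))
        ≤ q * Real.logb 2 ((s'.card : ℝ) / q) := by
      rw [hrw]
      exact mul_le_mul_of_nonneg_left hjen hq0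
    have hstep : q * Real.logb 2 ((s'.card : ℝ) / q)
        ≤ -(q * Real.logb 2 q) + q * Real.logb 2 (K : ℝ) := by
      rw [Real.logb_div (by linarith) hqne]
      have h1 : Real.logb 2 ((s'.card : ℝ)) ≤ Real.logb 2 (K : ℝ) :=
        Real.logb_le_logb_of_le one_lt_two (by linarith) hcardK
      have h2 := mul_le_mul_of_nonneg_left (sub_le_sub_right h1 (Real.logb 2 q)) hq0
      rw [mul_sub] at h2
      rw [mul_sub]
      linarith
    rw [hlhs]
    exact le_trans hmain hstep

/-! ### Entropy lemmas -/

section Entropy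

variable {Ω : Type*} [MeasurableSpace Ω] {B C : Type*}

lemma shEntropy_fintype [Fintype B] (μ : Measure Ω) (X : Ω → B) :
    shEntropy μ X
      = ∑ b : B, -((μ (X ⁻¹' {b})).toReal * Real.logb 2 (μ (X ⁻¹' {b})).toReal) := by
  rw [shEntropy, tsum_fintype, ← Finset.sum_neg_distrib]

lemma shEntropy_nonneg (μ : Measure Ω) [IsProbabilityMeasure μ] (X : Ω → B) :
    0 ≤ shEntropy μ X := by
  rw [shEntropy, neg_nonneg]
  refine tsum_nonpos (fun b => ?_)
  have h0 : 0 ≤ (μ (X ⁻¹' {b})).toReal := ENNReal.toReal_nonneg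
  have h1 : (μ (X ⁻¹' {b})).toReal ≤ 1 := by
    calc (μ (X ⁻¹' {b})).toReal ≤ (μ Set.univ).toReal :=
          ENNReal.toReal_mono (measure_ne_top _ _) (measure_mono (Set.subset_univ _))
      _ = 1 := by simp
  have h2 : Real.logb 2 (μ (X ⁻¹' {b})).toReal ≤ 0 := Real.logb_nonpos one_lt_two h0 h1
  exact mul_nonpos_of_nonneg_of_nonpos h0 h2

/-- Post-composition with an injective map preserves Shannon entropy. -/
lemma shEntropy_comp_inj (μ : Measure Ω) (Y : Ω → B) {ι : B → C}
    (hι : Function.Injective ι) :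
    shEntropy μ (fun ω => ι (Y ω)) = shEntropy μ Y := by
  rw [shEntropy, shEntropy, neg_inj]
  have hsupp : Function.support
      (fun c => (μ ((fun ω => ι (Y ω)) ⁻¹' {c})).toReal
        * Real.logb 2 (μ ((fun ω => ι (Y ω)) ⁻¹' {c})).toReal) ⊆ Set.range ι := by
    intro c hc
    by_contra hcr
    have hempty : (fun ω => ι (Y ω)) ⁻¹' {c} = ∅ := by
      ext ω
      simp only [Set.mem_preimage, Set.mem_singleton_iff, Set.mem_empty_iff_false, iff_false]
      intro hh
      exact hcr ⟨Y ω, hh⟩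
    rw [Function.mem_support] at hc
    rw [hempty] at hc
    simp at hc
  rw [← hι.tsum_eq hsupp]
  refine tsum_congr (fun b => ?_)
  have hfib : (fun ω => ι (Y ω)) ⁻¹' {ι b} = Y ⁻¹' {b} := by
    ext ω
    simp [hι.eq_iff]
  rw [hfib]

open Classical in
lemma measure_comp_fiber [Fintype B] [MeasurableSpace B] [MeasurableSingletonClass B]
    (μ : Measure Ω) [IsFiniteMeasure μ] {X : Ω → B} (hX : Measurable X)
    (f : B → C) (c : C) :
    (μ ((fun ω => f (X ω)) ⁻¹' {c})).toReal
      = ∑ b ∈ Finset.univ.filter (fun b => f b = c), (μ (X ⁻¹' {b})).toReal := by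
  have hmeas : ∀ b ∈ Finset.univ.filter (fun b => f b = c), MeasurableSet (X ⁻¹' {b}) :=
    fun b _ => hX (measurableSet_singleton b)
  have h := MeasureTheory.sum_measure_preimage_singleton (μ := μ)
      (Finset.univ.filter (fun b => f b = c)) hmeas
  have hset : X ⁻¹' ↑(Finset.univ.filter (fun b => f b = c))
      = (fun ω => f (X ω)) ⁻¹' {c} := by
    ext ω
    simp
  rw [← hset, ← h, ENNReal.toReal_sum (fun b _ => measure_ne_top _ _)]

lemma sum_p_eq_one [Fintype B] [MeasurableSpace B] [MeasurableSingletonClass B]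
    (μ : Measure Ω) [IsProbabilityMeasure μ] {X : Ω → B} (hX : Measurable X) :
    ∑ b : B, (μ (X ⁻¹' {b})).toReal = 1 := by
  have h := MeasureTheory.sum_measure_preimage_singleton (μ := μ) (Finset.univ : Finset B)
      (fun b _ => hX (measurableSet_singleton b))
  rw [Finset.coe_univ, Set.preimage_univ] at h
  calc ∑ b : B, (μ (X ⁻¹' {b})).toReal
      = (∑ b : B, μ (X ⁻¹' {b})).toReal :=
        (ENNReal.toReal_sum (fun b _ => measure_ne_top _ _)).symm
    _ = (μ Set.univ).toReal := by rw [h]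
    _ = 1 := by simp

/-- Data-processing inequality: entropy does not increase under deterministic maps. -/
lemma shEntropy_comp_le [Fintype B] [Fintype C] [MeasurableSpace B]
    [MeasurableSingletonClass B]
    (μ : Measure Ω) [IsProbabilityMeasure μ] {X : Ω → B} (hX : Measurable X) (f : B → C) :
    shEntropy μ (fun ω => f (X ω)) ≤ shEntropy μ X := by
  classical
  rw [shEntropy_fintype, shEntropy_fintype]
  rw [← Finset.sum_fiberwise (Finset.univ : Finset B) f
    (fun b => -((μ (X ⁻¹' {b})).toReal * Real.logb 2 (μ (X ⁻¹' {b})).toReal))]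
  refine Finset.sum_le_sum (fun c _ => ?_)
  have hq : (μ ((fun ω => f (X ω)) ⁻¹' {c})).toReal
      = ∑ b ∈ Finset.univ.filter (fun b => f b = c), (μ (X ⁻¹' {b})).toReal :=
    measure_comp_fiber μ hX f c
  have hsplit : ∑ b ∈ Finset.univ.filter (fun b => f b = c),
      -((μ (X ⁻¹' {b})).toReal
        * Real.logb 2 (μ ((fun ω => f (X ω)) ⁻¹' {c})).toReal)
      = -((μ ((fun ω => f (X ω)) ⁻¹' {c})).toReal
        * Real.logb 2 (μ ((fun ω => f (X ω)) ⁻¹' {c})).toReal) := by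
    rw [Finset.sum_neg_distrib, ← Finset.sum_mul, ← hq]
  rw [← hsplit]
  refine Finset.sum_le_sum (fun b hb => ?_)
  have hp0 : (0:ℝ) ≤ (μ (X ⁻¹' {b})).toReal := ENNReal.toReal_nonneg
  rcases eq_or_lt_of_le hp0 with h0 | h0
  · rw [← h0]
    simp
  · have hpb : (μ (X ⁻¹' {b})).toReal ≤ (μ ((fun ω => f (X ω)) ⁻¹' {c})).toReal := by
      rw [hq]
      exact Finset.single_le_sum (f := fun b => (μ (X ⁻¹' {b})).toReal)
        (fun i _ => ENNReal.toReal_nonneg) hb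
    have hlog := Real.logb_le_logb_of_le one_lt_two h0 hpb
    have hmul := mul_le_mul_of_nonneg_left hlog hp0
    linarith

open Classical in
/-- Fiber bound: `H(X) ≤ H(f ∘ X) + log₂ K` if all fibers of `f` have at most `K` elements. -/
lemma shEntropy_le_comp_add [Fintype B] [Fintype C] [MeasurableSpace B]
    [MeasurableSingletonClass B]
    (μ : Measure Ω) [IsProbabilityMeasure μ] {X : Ω → B} (hX : Measurable X) (f : B → C)
    (K : ℕ) (hK : 1 ≤ K)
    (hfib : ∀ (c : C) (s : Finset B), (∀ b ∈ s, f b = c) → s.card ≤ K) :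
    shEntropy μ X ≤ shEntropy μ (fun ω => f (X ω)) + Real.logb 2 K := by
  set p : B → ℝ := fun b => (μ (X ⁻¹' {b})).toReal with hp
  set q : C → ℝ := fun c => (μ ((fun ω => f (X ω)) ⁻¹' {c})).toReal with hqd
  have hq : ∀ c, q c = ∑ b ∈ Finset.univ.filter (fun b => f b = c), p b :=
    fun c => measure_comp_fiber μ hX f c
  have hqsum : ∑ c : C, q c = 1 := by
    rw [Finset.sum_congr rfl (fun c _ => hq c)]
    rw [Finset.sum_fiberwise (Finset.univ : Finset B) f p]
    exact sum_p_eq_one μ hX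
  have h1 : shEntropy μ X = ∑ c : C, ∑ b ∈ Finset.univ.filter (fun b => f b = c),
      -(p b * Real.logb 2 (p b)) := by
    rw [shEntropy_fintype]
    rw [Finset.sum_fiberwise (Finset.univ : Finset B) f
      (fun b => -(p b * Real.logb 2 (p b)))]
  rw [h1]
  have h2 : ∀ c : C, ∑ b ∈ Finset.univ.filter (fun b => f b = c),
      -(p b * Real.logb 2 (p b)) ≤ -(q c * Real.logb 2 (q c)) + q c * Real.logb 2 K := by
    intro c
    have := sum_neg_mul_logb_le (Finset.univ.filter (fun b => f b = c)) p
      (fun b _ => ENNReal.toReal_nonneg) K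
      (hfib c _ (fun b hb => (Finset.mem_filter.1 hb).2)) hK
    rw [← hq c] at this
    exact this
  calc ∑ c : C, ∑ b ∈ Finset.univ.filter (fun b => f b = c), -(p b * Real.logb 2 (p b))
      ≤ ∑ c : C, (-(q c * Real.logb 2 (q c)) + q c * Real.logb 2 K) :=
        Finset.sum_le_sum (fun c _ => h2 c)
    _ = (∑ c : C, -(q c * Real.logb 2 (q c))) + (∑ c : C, q c) * Real.logb 2 K := by
        rw [Finset.sum_add_distrib, Finset.sum_mul]
    _ = shEntropy μ (fun ω => f (X ω)) + Real.logb 2 K := by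
        rw [shEntropy_fintype, hqsum, one_mul]

lemma shEntropy_le_logb_card [Fintype B] [Nonempty B] [MeasurableSpace B]
    [MeasurableSingletonClass B]
    (μ : Measure Ω) [IsProbabilityMeasure μ] {X : Ω → B} (hX : Measurable X) :
    shEntropy μ X ≤ Real.logb 2 (Fintype.card B) := by
  rw [shEntropy_fintype]
  have h := sum_neg_mul_logb_le Finset.univ (fun b => (μ (X ⁻¹' {b})).toReal)
    (fun b _ => ENNReal.toReal_nonneg) (Fintype.card B)
    (le_of_eq (Finset.card_univ)) Fintype.card_pos
  rw [sum_p_eq_one μ hX] at h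
  simpa using h

end Entropy

/-! ### Combinatorial lemmas on rank sequences -/

section Comb

variable {A : Type*} [LinearOrder A] {L : ℕ}

lemma card_filter_eq_countP {α : Type*} (s : Finset α) (p : α → Prop) [DecidablePred p] :
    (s.filter p).card = Multiset.countP p s.val := by
  rw [Multiset.countP_eq_card_filter, ← Finset.filter_val]
  rfl

/-- Multiset of the first `k` letters of a word. -/
def pmwAux (w : Fin L → A) (k : ℕ) : Multiset A :=
  (Finset.univ.filter (fun j : Fin L => j.1 < k)).val.map w

/-- Rank of position `i` inside a word. -/
def rkwAux (w : Fin L → A) (i : Fin L) : ℕ :=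
  (Finset.univ.filter (fun j : Fin L => j.1 ≤ i.1 ∧ w j ≤ w i)).card

lemma rkwAux_eq_countP (w : Fin L → A) (i : Fin L) :
    rkwAux w i = Multiset.countP (fun a => a ≤ w i) (pmwAux w (i.1 + 1)) := by
  classical
  have hR : Multiset.countP (fun a => a ≤ w i) (pmwAux w (i.1 + 1))
      = Multiset.countP (fun j : Fin L => w j ≤ w i ∧ j.1 < i.1 + 1)
          (Finset.univ : Finset (Fin L)).val := by
    rw [pmwAux, Multiset.countP_map, ← Multiset.countP_eq_card_filter, Finset.filter_val,
      Multiset.countP_filter]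
  rw [hR, rkwAux, card_filter_eq_countP]
  refine Multiset.countP_congr rfl (fun j _ => ?_)
  rw [eq_iff_iff]
  constructor
  · rintro ⟨h1, h2⟩
    exact ⟨h2, by omega⟩
  · rintro ⟨h1, h2⟩
    exact ⟨by omega, h1⟩

lemma rankVar_eq_rkwAux (x : ℕ → A) (i : Fin L) :
    rankVar (coordProc (A := A)) (i.1 + 1) x = rkwAux (fun j : Fin L => x j.1) i := by
  classical
  rw [rankVar, rkwAux]
  refine Finset.card_bij' (fun n hn => (⟨n - 1, ?_⟩ : Fin L)) (fun j hj => j.1 + 1)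
    ?_ ?_ ?_ ?_
  · rcases Finset.mem_filter.1 hn with ⟨hmem, _⟩
    rcases Finset.mem_Icc.1 hmem with ⟨h1, h2⟩
    have := i.2
    omega
  · intro n hn
    rcases Finset.mem_filter.1 hn with ⟨hmem, hval⟩
    rcases Finset.mem_Icc.1 hmem with ⟨h1, h2⟩
    refine Finset.mem_filter.2 ⟨Finset.mem_univ _, ⟨show n - 1 ≤ i.1 by omega, ?_⟩⟩
    have he1 : coordProc n x = x (n - 1) := rfl
    have he2 : coordProc (i.1 + 1) x = x i.1 := by
      rw [coordProc, Nat.add_sub_cancel]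
    rw [he1, he2] at hval
    exact hval
  · intro j hj
    rcases Finset.mem_filter.1 hj with ⟨_, hle, hval⟩
    refine Finset.mem_filter.2 ⟨Finset.mem_Icc.2 ⟨by omega, by omega⟩, ?_⟩
    have he1 : coordProc (j.1 + 1) x = x j.1 := by rw [coordProc, Nat.add_sub_cancel]
    have he2 : coordProc (i.1 + 1) x = x i.1 := by rw [coordProc, Nat.add_sub_cancel]
    rw [he1, he2]
    exact hval
  · intro n hn
    dsimp only
    rcases Finset.mem_filter.1 hn with ⟨hmem, _⟩
    rcases Finset.mem_Icc.1 hmem with ⟨h1, _⟩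
    show n - 1 + 1 = n
    omega
  · intro j hj
    exact Fin.ext (show j.1 + 1 - 1 = j.1 by omega)

lemma pmwAux_succ (w : Fin L → A) (k : ℕ) (hk : k < L) :
    pmwAux w (k + 1) = w ⟨k, hk⟩ ::ₘ pmwAux w k := by
  classical
  rw [pmwAux, pmwAux]
  have hins : (Finset.univ.filter (fun j : Fin L => j.1 < k + 1))
      = insert ⟨k, hk⟩ (Finset.univ.filter (fun j : Fin L => j.1 < k)) := by
    ext j
    simp only [Finset.mem_filter, Finset.mem_univ, true_and, Finset.mem_insert, Fin.ext_iff]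
    omega
  rw [hins, Finset.insert_val_of_notMem (by simp), Multiset.map_cons]

lemma pmwAux_count [DecidableEq A] (w : Fin L → A) (a : A) :
    Multiset.count a (pmwAux w L) = (Finset.univ.filter (fun i : Fin L => w i = a)).card := by
  classical
  have huniv : (Finset.univ.filter (fun j : Fin L => j.1 < L)) = Finset.univ :=
    Finset.filter_true_of_mem (fun j _ => j.2)
  rw [pmwAux, huniv, Multiset.count_map, ← Multiset.countP_eq_card_filter,
    card_filter_eq_countP]
  refine Multiset.countP_congr rfl (fun j _ => ?_)
  rw [eq_iff_iff, eq_comm]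

lemma eq_of_countP_eq {M : Multiset A} {a b : A} (ha : a ∈ M) (hb : b ∈ M)
    (h : M.countP (fun x => x ≤ a) = M.countP (fun x => x ≤ b)) : a = b := by
  classical
  by_contra hne
  have key : ∀ u v : A, u ∈ M → v ∈ M → u < v →
      M.countP (fun x => x ≤ u) + 1 ≤ M.countP (fun x => x ≤ v) := by
    intro u v hu hv huv
    rw [Multiset.countP_eq_countP_filter_add M (fun x => x ≤ v) (fun x => x ≤ u)]
    have h1 : Multiset.countP (fun x => x ≤ v) (M.filter (fun x => x ≤ u))
        = Multiset.countP (fun x => x ≤ u) M := by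
      rw [Multiset.countP_filter]
      refine Multiset.countP_congr rfl (fun x _ => ?_)
      rw [eq_iff_iff]
      constructor
      · exact fun hx => hx.2
      · exact fun hx => ⟨le_trans hx huv.le, hx⟩
    have h2 : 1 ≤ Multiset.countP (fun x => x ≤ v) (M.filter (fun x => ¬ x ≤ u)) := by
      refine Multiset.countP_pos.2 ⟨v, ?_, le_refl v⟩
      exact Multiset.mem_filter.2 ⟨hv, not_le.2 huv⟩
    omega
  rcases Ne.lt_or_gt hne with hlt | hlt
  · have := key a b ha hb hlt
    omega
  · have := key b a hb ha hlt
    omega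

lemma word_eq_of_rk_eq {w w' : Fin L → A}
    (hr : ∀ i, rkwAux w i = rkwAux w' i) (hm : pmwAux w L = pmwAux w' L) : w = w' := by
  classical
  have aux : ∀ j, j ≤ L → (pmwAux w (L - j) = pmwAux w' (L - j)
      ∧ ∀ i : Fin L, L - j ≤ i.1 → w i = w' i) := by
    intro j
    induction j with
    | zero =>
      intro _
      refine ⟨by simpa using hm, fun i hi => False.elim ?_⟩
      have := i.2
      omega
    | succ n ih =>
      intro hn
      obtain ⟨hM, hpt⟩ := ih (by omega)
      have hkL : L - (n + 1) < L := by omega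
      set k := L - (n + 1) with hkdef
      have hLn : L - n = k + 1 := by omega
      rw [hLn] at hM
      have hik : w ⟨k, hkL⟩ = w' ⟨k, hkL⟩ := by
        have ha : w ⟨k, hkL⟩ ∈ pmwAux w (k + 1) := by
          rw [pmwAux_succ w k hkL]
          exact Multiset.mem_cons_self _ _
        have hb : w' ⟨k, hkL⟩ ∈ pmwAux w (k + 1) := by
          rw [hM, pmwAux_succ w' k hkL]
          exact Multiset.mem_cons_self _ _
        refine eq_of_countP_eq ha hb ?_
        have h1 := rkwAux_eq_countP w ⟨k, hkL⟩
        have h2 := rkwAux_eq_countP w' ⟨k, hkL⟩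
        simp only at h1 h2
        rw [← h1]
        conv_rhs => rw [hM, ← h2]
        exact hr ⟨k, hkL⟩
      constructor
      · have hM2 := hM
        rw [pmwAux_succ w k hkL, pmwAux_succ w' k hkL, hik] at hM2
        exact (Multiset.cons_inj_right _).1 hM2
      · intro i hi
        by_cases hik' : i.1 = k
        · have hieq : i = ⟨k, hkL⟩ := Fin.ext hik'
          rw [hieq]
          exact hik
        · exact hpt i (by omega)
  funext i
  exact (aux L le_rfl).2 i (by omega)

/-- Bounded-valued rank function. -/
def rkbAux (w : Fin L → A) : Fin L → Fin (L + 1) :=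
  fun i => ⟨rkwAux w i, by
    have h1 : rkwAux w i ≤ (Finset.univ : Finset (Fin L)).card :=
      Finset.card_filter_le _ _
    rw [Finset.card_univ, Fintype.card_fin] at h1
    omega⟩

lemma rkbAux_fiber_card_le {A : Type*} [LinearOrder A] [Fintype A] {L : ℕ}
    (c : Fin L → Fin (L + 1)) (s : Finset (Fin L → A))
    (hs : ∀ w ∈ s, rkbAux w = c) :
    s.card ≤ (L + 1) ^ (Fintype.card A) := by
  classical
  have hcnt : ∀ w : Fin L → A, ∀ a : A,
      (Finset.univ.filter (fun i : Fin L => w i = a)).card < L + 1 := by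
    intro w a
    have hle := Finset.card_filter_le (Finset.univ : Finset (Fin L))
      (fun i : Fin L => w i = a)
    rw [Finset.card_univ, Fintype.card_fin] at hle
    omega
  calc s.card ≤ (Finset.univ : Finset (A → Fin (L + 1))).card := by
        refine Finset.card_le_card_of_injOn
          (fun w => (fun a => (⟨(Finset.univ.filter (fun i : Fin L => w i = a)).card,
            hcnt w a⟩ : Fin (L + 1))))
          (fun w _ => Finset.mem_univ _) ?_
        intro w hw w' hw' hcnteq
        have hrk : ∀ i, rkwAux w i = rkwAux w' i := by
          intro i
          have h1 := hs w hw
          have h2 := hs w' hw'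
          have := congrFun (h1.trans h2.symm) i
          exact Fin.val_eq_of_eq this
        have hms : pmwAux w L = pmwAux w' L := by
          refine Multiset.ext.2 (fun a => ?_)
          rw [pmwAux_count w a, pmwAux_count w' a]
          have := congrFun hcnteq a
          exact Fin.val_eq_of_eq this
        exact word_eq_of_rk_eq hrk hms
    _ = (L + 1) ^ (Fintype.card A) := by
        rw [Finset.card_univ, Fintype.card_fun, Fintype.card_fin]

end Comb

set_option maxHeartbeats 1000000 in
/-- For a stationary finite-alphabet source (not necessarily ergodic) admitting an
ergodic decomposition with integrable entropy rates,
`liminf_L (1/(L−1)) H_m(R_1,…,R_L) ≥ h_m(S)`. -/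
theorem liminf_permutation_entropy_ge_entropy_rate {A : Type*}
    [Fintype A] [LinearOrder A] [MeasurableSpace A] [MeasurableSingletonClass A]
    (m : Measure (ℕ → A)) [IsProbabilityMeasure m]
    (hinv : MeasurePreserving (seqShift (A := A)) m m)
    -- ergodic decomposition of m into ergodic components m_w over (W, ν)
    (W : Type*) [MeasurableSpace W] (ν : Measure W) [IsProbabilityMeasure ν]
    (mw : W → Measure (ℕ → A))
    (hprob : ∀ w, IsProbabilityMeasure (mw w))
    (herg : ∀ w, Ergodic (seqShift (A := A)) (mw w))
    (hmix : ∀ C : Set (ℕ → A), MeasurableSet C → m C = ∫⁻ w, mw w C ∂ν)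
    -- entropy rates of the components, integrable
    (hw : W → ℝ)
    (hwlim : ∀ w, Filter.Tendsto
      (fun L : ℕ => (1 / (L : ℝ)) *
        shEntropy (mw w) (fun x => fun i : Fin L => coordProc (i.1 + 1) x))
      Filter.atTop (nhds (hw w)))
    (hint : Integrable hw ν)
    -- the Shannon entropy rate of the source
    (h : ℝ)
    (hrate : Filter.Tendsto
      (fun L : ℕ => (1 / (L : ℝ)) *
        shEntropy m (fun x => fun i : Fin L => coordProc (i.1 + 1) x))
      Filter.atTop (nhds h)) :
    h ≤ Filter.liminf
      (fun L : ℕ => (1 / ((L : ℝ) - 1)) *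
        shEntropy m (fun x => fun i : Fin L => rankVar (coordProc (A := A)) (i.1 + 1) x))
      Filter.atTop := by
  classical
  -- the alphabet is nonempty
  have hAne : Nonempty A := by
    by_contra hA
    rw [not_nonempty_iff] at hA
    have hE : IsEmpty (ℕ → A) := ⟨fun f => hA.false (f 0)⟩
    have huniv : (Set.univ : Set (ℕ → A)) = ∅ := Set.univ_eq_empty_iff.2 hE
    have h1 : m Set.univ = 1 := measure_univ
    rw [huniv, measure_empty] at h1
    exact zero_ne_one h1
  haveI : Nonempty A := hAne
  have hcardA : 1 ≤ Fintype.card A := Fintype.card_pos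
  set cA : ℕ := Fintype.card A with hcA
  -- notation
  set φ : ℕ → ℝ := fun L => shEntropy m (fun x => fun i : Fin L => coordProc (i.1 + 1) x)
    with hφdef
  set ρ : ℕ → ℝ := fun L =>
      shEntropy m (fun x => fun i : Fin L => rankVar (coordProc (A := A)) (i.1 + 1) x)
    with hρdef
  -- per-L facts
  have keyρ : ∀ L : ℕ,
      φ L ≤ ρ L + (cA : ℝ) * Real.logb 2 ((L : ℝ) + 1) ∧
      ρ L ≤ (L : ℝ) * Real.logb 2 (cA : ℝ) := by
    intro L
    set win : (ℕ → A) → (Fin L → A) := fun x => fun i => x i.1 with hwin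
    have hwinmeas : Measurable win :=
      measurable_pi_lambda _ (fun i => measurable_pi_apply i.1)
    have hφL : φ L = shEntropy m win := rfl
    have hranks : (fun x => fun i : Fin L => rankVar (coordProc (A := A)) (i.1 + 1) x)
        = fun x => (fun i : Fin L => ((rkbAux (win x) i : ℕ))) := by
      funext x
      funext i
      rw [rankVar_eq_rkwAux x i]
      rfl
    have hι : Function.Injective (fun g : Fin L → Fin (L + 1) => (fun i => (g i : ℕ))) := by
      intro g g' hgg
      funext i
      exact Fin.ext (congrFun hgg i)
    have hρL : ρ L = shEntropy m (fun x => rkbAux (win x)) := by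
      rw [hρdef]
      simp only
      rw [hranks]
      exact shEntropy_comp_inj m (fun x => rkbAux (win x)) hι
    constructor
    · -- lower bound on ρ
      have hK1 : 1 ≤ (L + 1) ^ cA := Nat.one_le_pow _ _ (by omega)
      have hE3 := shEntropy_le_comp_add (B := Fin L → A) (C := Fin L → Fin (L + 1))
        m hwinmeas (rkbAux) ((L + 1) ^ cA) hK1 (fun c s hs => rkbAux_fiber_card_le c s hs)
      have hlog : Real.logb 2 (((L + 1) ^ cA : ℕ) : ℝ)
          = (cA : ℝ) * Real.logb 2 ((L : ℝ) + 1) := by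
        push_cast
        rw [Real.logb_pow]
      rw [hlog] at hE3
      rw [hφL, hρL]
      exact hE3
    · -- upper bound on ρ
      have hup : shEntropy m (fun x => rkbAux (win x)) ≤ shEntropy m win :=
        shEntropy_comp_le m hwinmeas rkbAux
      have hcardb : shEntropy m win ≤ Real.logb 2 (Fintype.card (Fin L → A)) :=
        shEntropy_le_logb_card m hwinmeas
      have hcard2 : (Fintype.card (Fin L → A) : ℝ) = ((cA ^ L : ℕ) : ℝ) := by
        rw [Fintype.card_fun, Fintype.card_fin, hcA]
      rw [hcard2] at hcardb
      have hlog2 : Real.logb 2 ((cA ^ L : ℕ) : ℝ) = (L : ℝ) * Real.logb 2 (cA : ℝ) := by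
        push_cast
        rw [Real.logb_pow]
      rw [hlog2] at hcardb
      rw [hρL]
      exact le_trans hup hcardb
  -- limits
  have t0 : Tendsto (fun L : ℕ => ((L : ℝ) - 1)⁻¹) atTop (nhds 0) := by
    apply Filter.Tendsto.inv_tendsto_atTop
    have := Filter.tendsto_atTop_add_const_right atTop (-1 : ℝ) tendsto_natCast_atTop_atTop
    simpa [sub_eq_add_neg] using this
  have t1 : Tendsto (fun L : ℕ => (L : ℝ) / ((L : ℝ) - 1)) atTop (nhds 1) := by
    have hbase : Tendsto (fun L : ℕ => 1 + ((L : ℝ) - 1)⁻¹) atTop (nhds (1 + 0)) :=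
      tendsto_const_nhds.add t0
    rw [add_zero] at hbase
    refine hbase.congr' ?_
    filter_upwards [eventually_ge_atTop 2] with L hL
    have hL2 : (2 : ℝ) ≤ (L : ℝ) := by exact_mod_cast hL
    have hne : (L : ℝ) - 1 ≠ 0 := by linarith
    field_simp
    ring
  have t3 : Tendsto (fun L : ℕ => ((L : ℝ) + 1) / ((L : ℝ) - 1)) atTop (nhds 1) := by
    have hbase : Tendsto (fun L : ℕ => 1 + 2 * ((L : ℝ) - 1)⁻¹) atTop (nhds (1 + 2 * 0)) :=
      tendsto_const_nhds.add (t0.const_mul 2)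
    rw [mul_zero, add_zero] at hbase
    refine hbase.congr' ?_
    filter_upwards [eventually_ge_atTop 2] with L hL
    have hL2 : (2 : ℝ) ≤ (L : ℝ) := by exact_mod_cast hL
    have hne : (L : ℝ) - 1 ≠ 0 := by linarith
    field_simp
    ring
  have tlog : Tendsto (fun L : ℕ => Real.log ((L : ℝ) + 1) / ((L : ℝ) + 1)) atTop (nhds 0) := by
    have hd := Real.isLittleO_log_id_atTop.tendsto_div_nhds_zero
    have hin : Tendsto (fun L : ℕ => (L : ℝ) + 1) atTop atTop :=
      Filter.tendsto_atTop_add_const_right atTop 1 tendsto_natCast_atTop_atTop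
    exact hd.comp hin
  have t2 : Tendsto (fun L : ℕ => ((L : ℝ) - 1)⁻¹ * Real.logb 2 ((L : ℝ) + 1))
      atTop (nhds 0) := by
    have hlog2ne : Real.log 2 ≠ 0 := ne_of_gt (Real.log_pos one_lt_two)
    have tprod : Tendsto (fun L : ℕ =>
        (Real.log ((L : ℝ) + 1) / ((L : ℝ) + 1)) * (((L : ℝ) + 1) / ((L : ℝ) - 1))
          * (Real.log 2)⁻¹) atTop (nhds (0 * 1 * (Real.log 2)⁻¹)) :=
      (tlog.mul t3).mul_const _
    rw [zero_mul, zero_mul] at tprod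
    refine tprod.congr' ?_
    filter_upwards [eventually_ge_atTop 2] with L hL
    have hL2 : (2 : ℝ) ≤ (L : ℝ) := by exact_mod_cast hL
    have hne1 : (L : ℝ) - 1 ≠ 0 := by linarith
    have hne2 : (L : ℝ) + 1 ≠ 0 := by linarith
    rw [Real.logb]
    field_simp
  -- the comparison sequence
  set u : ℕ → ℝ := fun L => ((L : ℝ) / ((L : ℝ) - 1)) * ((1 / (L : ℝ)) * φ L)
      - (cA : ℝ) * (((L : ℝ) - 1)⁻¹ * Real.logb 2 ((L : ℝ) + 1)) with hudef
  have hu : Tendsto u atTop (nhds h) := by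
    have := (t1.mul hrate).sub (t2.const_mul (cA : ℝ))
    rw [one_mul, mul_zero, sub_zero] at this
    exact this
  -- eventual comparison
  set v : ℕ → ℝ := fun L => (1 / ((L : ℝ) - 1)) * ρ L with hvdef
  have huv : ∀ᶠ L in atTop, u L ≤ v L := by
    filter_upwards [eventually_ge_atTop 2] with L hL
    have hL2 : (2 : ℝ) ≤ (L : ℝ) := by exact_mod_cast hL
    have hLpos : (0 : ℝ) < (L : ℝ) - 1 := by linarith
    have hL0 : (L : ℝ) ≠ 0 := by linarith
    have hkey := (keyρ L).1
    have hueq : u L = (1 / ((L : ℝ) - 1)) *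
        (φ L - (cA : ℝ) * Real.logb 2 ((L : ℝ) + 1)) := by
      rw [hudef]
      simp only
      field_simp
    rw [hueq, hvdef]
    simp only
    refine mul_le_mul_of_nonneg_left ?_ (by positivity)
    linarith
  -- boundedness facts
  have hvbd : ∀ᶠ L in atTop, v L ≤ 2 * Real.logb 2 (cA : ℝ) := by
    filter_upwards [eventually_ge_atTop 2] with L hL
    have hL2 : (2 : ℝ) ≤ (L : ℝ) := by exact_mod_cast hL
    have hLpos : (0 : ℝ) < (L : ℝ) - 1 := by linarith
    have hρb := (keyρ L).2
    have hlogA : 0 ≤ Real.logb 2 (cA : ℝ) :=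
      Real.logb_nonneg one_lt_two (by exact_mod_cast hcardA)
    have hfrac : (L : ℝ) / ((L : ℝ) - 1) ≤ 2 := by
      rw [div_le_iff₀ hLpos]
      linarith
    have hρ0 : 0 ≤ ρ L := shEntropy_nonneg m _
    rw [hvdef]
    simp only
    calc (1 / ((L : ℝ) - 1)) * ρ L
        ≤ (1 / ((L : ℝ) - 1)) * ((L : ℝ) * Real.logb 2 (cA : ℝ)) := by
          refine mul_le_mul_of_nonneg_left hρb (by positivity)
      _ = ((L : ℝ) / ((L : ℝ) - 1)) * Real.logb 2 (cA : ℝ) := by ring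
      _ ≤ 2 * Real.logb 2 (cA : ℝ) := mul_le_mul_of_nonneg_right hfrac hlogA
  have hcob : Filter.IsCoboundedUnder (· ≥ ·) atTop v :=
    Filter.isCoboundedUnder_ge_of_eventually_le atTop hvbd
  have hbdu : Filter.IsBoundedUnder (· ≥ ·) atTop u := hu.isBoundedUnder_ge
  calc h = Filter.liminf u atTop := (hu.liminf_eq).symm
    _ ≤ Filter.liminf v atTop := Filter.liminf_le_liminf huv hbdu hcob
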